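/- If G is a systematic generator matrix of an [n,k] MDS code, then every (λ_1,…,λ_k) in the service rate region satisfies ∑_{i=1}^k ( min{λ_i, 1} + k · max{0, λ_i − 1} ) ≤ n. -/

import Mathlib

open Finset

/-- `R` is a recovery set for object `i`: the standard basis vector `e i` lies in the
span of the columns of `G` indexed by `R`. -/
def recSet {F : Type} [Field F] {k n : ℕ} (G : Matrix (Fin k) (Fin n) F)
    (i : Fin k) (R : Finset (Fin n)) : Prop :=
  (Pi.single i 1 : Fin k → F) ∈
    Submodule.span F ((fun j => fun r => G r j) '' (R : Set (Fin n)))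

/-- A recovery `G`-system: each `Rs i` is a nonempty collection of recovery sets for object `i`. -/
def recSystem {F : Type} [Field F] {k n : ℕ} (G : Matrix (Fin k) (Fin n) F)
    (Rs : Fin k → Finset (Finset (Fin n))) : Prop :=
  ∀ i, (Rs i).Nonempty ∧ ∀ R ∈ Rs i, recSet G i R

/-- Membership of a rate vector `lam` in the service rate region `Λ(Rs, μ)`:
there is a feasible allocation. -/
def inRegion {k n : ℕ} (Rs : Fin k → Finset (Finset (Fin n))) (μ : ℝ)
    (lam : Fin k → ℝ) : Prop :=
  ∃ a : Fin k → Finset (Fin n) → ℝ,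
    (∀ i R, 0 ≤ a i R) ∧
    (∀ i, ∑ R ∈ Rs i, a i R = lam i) ∧
    (∀ j : Fin n, ∑ i, ∑ R ∈ Rs i, (if j ∈ R then a i R else 0) ≤ μ)

/-- The dual of the code generated by `G` (the row space of `G`). -/
def dualCode {F : Type} [Field F] {k n : ℕ} (G : Matrix (Fin k) (Fin n) F) :
    Set (Fin n → F) :=
  {y | ∀ c ∈ Submodule.span F (Set.range (fun i => fun j => G i j)),
    ∑ j, y j * c j = 0}

/-- `G` is systematic: its first `k` columns form the `k × k` identity matrix. -/
def systematic {F : Type} [Field F] {k n : ℕ} (hkn : k ≤ n)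
    (G : Matrix (Fin k) (Fin n) F) : Prop :=
  ∀ i r : Fin k, G r (Fin.castLE hkn i) = if r = i then 1 else 0

/-- Any nonzero vector in the right kernel of `G` has Hamming weight more than `k`. -/
lemma ker_big {F : Type} [Field F] [DecidableEq F] {k n : ℕ} (hkn : k ≤ n)
    (G : Matrix (Fin k) (Fin n) F) (hsys : systematic hkn G)
    (hd : ∀ c ∈ Submodule.span F (Set.range (fun i => fun j => G i j)),
        c ≠ 0 → n - k + 1 ≤ hammingNorm c)
    (x : Fin n → F) (hx : G.mulVec x = 0) (hw : hammingNorm x ≤ k) : x = 0 := by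
  classical
  have hs : ∀ i r : Fin k, G r (Fin.castLE hkn i) = if r = i then 1 else 0 := hsys
  -- enlarge the support to a set of size k
  obtain ⟨S, hsS, -, hcard⟩ :=
    Finset.exists_subsuperset_card_eq (Finset.subset_univ {j | x j ≠ 0}) hw
      (by simpa using hkn)
  set e := S.orderIsoOfFin hcard with he
  set M : Matrix (Fin k) (Fin k) F := fun r s => G r (e s) with hM
  -- left kernel of M is trivial
  have hinj : Function.Injective M.vecMul := by
    have hker : ∀ m : Fin k → F, M.vecMul m = 0 → m = 0 := by
      intro m hm
      set c : Fin n → F := G.vecMul m with hc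
      have hcmem : c ∈ Submodule.span F (Set.range (fun i => fun j => G i j)) := by
        have : c = ∑ r, m r • (fun j => G r j) := by
          funext j
          simp [hc, Matrix.vecMul, dotProduct]
        rw [this]
        exact Submodule.sum_mem _ fun r _ =>
          Submodule.smul_mem _ _ (Submodule.subset_span ⟨r, rfl⟩)
      have hcS : ∀ j ∈ S, c j = 0 := by
        intro j hj
        have hes : ((e (e.symm ⟨j, hj⟩)) : Fin n) = j := by simp
        have heq : M.vecMul m (e.symm ⟨j, hj⟩) = c j := by
          simp only [hM, hc, Matrix.vecMul, dotProduct]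
          rw [hes]
        rw [← heq, hm]
        rfl
      have hczero : c = 0 := by
        by_contra hne
        have h1 := hd c hcmem hne
        have h2 : hammingNorm c ≤ n - k := by
          have hsub : ({j | c j ≠ 0} : Finset (Fin n)) ⊆ Sᶜ := by
            intro j hj
            simp only [Finset.mem_filter, Finset.mem_univ, true_and] at hj
            simp only [Finset.mem_compl]
            intro hjS
            exact hj (hcS j hjS)
          calc hammingNorm c ≤ Sᶜ.card := Finset.card_le_card hsub
            _ = n - k := by simp [Finset.card_compl, hcard]
        omega
      funext i
      have : c (Fin.castLE hkn i) = m i := by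
        simp only [hc, Matrix.vecMul, dotProduct, hs, mul_ite, mul_one,
          mul_zero, Finset.sum_ite_eq', Finset.mem_univ, if_true]
      rw [hczero] at this
      simpa using this.symm
    intro m₁ m₂ hmm
    have hmm' : M.vecMul m₁ = M.vecMul m₂ := hmm
    have : M.vecMul (m₁ - m₂) = 0 := by
      rw [Matrix.sub_vecMul, hmm', sub_self]
    have := hker _ this
    exact sub_eq_zero.mp this
  have hunit : IsUnit M := Matrix.vecMul_injective_iff_isUnit.mp hinj
  have hmv : Function.Injective M.mulVec := Matrix.mulVec_injective_iff_isUnit.mpr hunit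
  -- right kernel
  set y : Fin k → F := fun s => x (e s) with hy
  have hMy : M.mulVec y = 0 := by
    funext r
    have hoff : ∀ j ∈ Finset.univ \ S, G r j * x j = 0 := by
      intro j hj
      have : x j = 0 := by
        by_contra hne
        exact (Finset.mem_sdiff.mp hj).2 (hsS (by simp [hne]))
      simp [this]
    have step : ∑ s : Fin k, G r (e s) * x (e s) = ∑ j ∈ S, G r j * x j := by
      rw [← Finset.sum_coe_sort S (fun j => G r j * x j)]
      exact Fintype.sum_bijective e.toEquiv e.toEquiv.bijective _ _ (fun s => rfl)
    have : M.mulVec y r = G.mulVec x r := by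
      simp only [Matrix.mulVec, dotProduct, hM, hy]
      rw [step, ← Finset.sum_subset (Finset.subset_univ S)
        (fun j _ hj => hoff j (Finset.mem_sdiff.mpr ⟨Finset.mem_univ j, hj⟩))]
    rw [this, hx]
  have hy0 : y = 0 := hmv (by rw [hMy, Matrix.mulVec_zero])
  funext j
  show x j = 0
  by_contra hne
  have hjS : j ∈ S := hsS (by simp [hne])
  have h0 : y (e.symm ⟨j, hjS⟩) = 0 := congrFun hy0 _
  exact hne (by simpa [hy] using h0)

/-- A recovery set avoiding the systematic column has size at least `k`. -/
lemma rec_size {F : Type} [Field F] [DecidableEq F] {k n : ℕ} (hkn : k ≤ n)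
    (G : Matrix (Fin k) (Fin n) F) (hsys : systematic hkn G)
    (hd : ∀ c ∈ Submodule.span F (Set.range (fun i => fun j => G i j)),
        c ≠ 0 → n - k + 1 ≤ hammingNorm c)
    (i : Fin k) (R : Finset (Fin n)) (hR : recSet G i R)
    (hnot : Fin.castLE hkn i ∉ R) : k ≤ R.card := by
  classical
  have hs : ∀ i r : Fin k, G r (Fin.castLE hkn i) = if r = i then 1 else 0 := hsys
  have hR' : (Pi.single i 1 : Fin k → F) ∈
      Submodule.span F ((fun j => fun r => G r j) '' (R : Set (Fin n))) := hR
  rw [Finsupp.mem_span_image_iff_linearCombination] at hR'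
  obtain ⟨l, hl, hsum⟩ := hR'
  have hlsupp : ∀ j, l j ≠ 0 → j ∈ R := by
    intro j hj
    exact_mod_cast (Finsupp.mem_supported F l).mp hl (Finsupp.mem_support_iff.mpr hj)
  set x : Fin n → F := fun j => l j with hxdef
  have hGx : G.mulVec x = Pi.single i 1 := by
    funext r
    have h1 := congrFun hsum r
    simp only [Finsupp.linearCombination_apply, Finsupp.sum_apply, Finsupp.sum,
      Finset.sum_apply, Pi.smul_apply, smul_eq_mul] at h1
    rw [← h1]
    show ∑ j, G r j * x j = ∑ j ∈ l.support, l j * G r j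
    rw [← Finset.sum_subset (Finset.subset_univ l.support)
      (fun j _ hj => by
        have : x j = 0 := by simpa [hxdef] using Finsupp.notMem_support_iff.mp hj
        simp [this])]
    exact Finset.sum_congr rfl fun j _ => mul_comm _ _
  set c : Fin n := Fin.castLE hkn i with hcdef
  set y : Fin n → F := x - Pi.single c 1 with hydef
  have hGy : G.mulVec y = 0 := by
    rw [hydef, Matrix.mulVec_sub, hGx, Matrix.mulVec_single]
    funext r
    simp [hcdef, hs i r, Pi.single_apply]
  have hyc : y c = -1 := by
    have hxc : x c = 0 := by
      by_contra hne
      exact hnot (hlsupp c hne)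
    simp [hydef, hxc]
  have hyne : y ≠ 0 := by
    intro h0
    rw [h0] at hyc
    simp at hyc
  have hbig : ¬ hammingNorm y ≤ k := fun hle =>
    hyne (ker_big hkn G hsys hd y hGy hle)
  have hsmall : hammingNorm y ≤ R.card + 1 := by
    have hsub : ({j | y j ≠ 0} : Finset (Fin n)) ⊆ insert c R := by
      intro j hj
      simp only [Finset.mem_filter, Finset.mem_univ, true_and] at hj
      rcases eq_or_ne j c with rfl | hne
      · exact Finset.mem_insert_self _ _
      · have hyx : y j = x j := by simp [hydef, Pi.single_apply, hne]
        refine Finset.mem_insert_of_mem (hlsupp j fun h0 => hj ?_)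
        rw [hyx]
        exact h0
    calc hammingNorm y ≤ (insert c R).card := Finset.card_le_card hsub
      _ ≤ R.card + 1 := Finset.card_insert_le _ _
  omega

/-- if `G` is a systematic generator matrix of an `[n,k]` MDS code
(minimum distance `n − k + 1`), then every `lam` in the service rate region satisfies
`∑ i (min(lam i, 1) + k · max(0, lam i − 1)) ≤ n`. -/
theorem mds_region_bound {F : Type} [Field F] [Fintype F] [DecidableEq F] {k n : ℕ}
    (hkn : k ≤ n) (G : Matrix (Fin k) (Fin n) F)
    (hrank : G.rank = k) (hsys : systematic hkn G)
    (d : ℕ)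
    (hdmin : (∃ c ∈ Submodule.span F (Set.range (fun i => fun j => G i j)),
        c ≠ 0 ∧ hammingNorm c = d) ∧
      ∀ c ∈ Submodule.span F (Set.range (fun i => fun j => G i j)),
        c ≠ 0 → d ≤ hammingNorm c)
    (hMDS : d = n - k + 1)
    (Rs : Fin k → Finset (Finset (Fin n))) (hRs : recSystem G Rs)
    (lam : Fin k → ℝ) (h : inRegion Rs 1 lam) :
    ∑ i, (min (lam i) 1 + (k : ℝ) * max 0 (lam i - 1)) ≤ n := by
  classical
  rcases Nat.eq_zero_or_pos k with hk0 | hk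
  · subst hk0
    simp only [Finset.univ_eq_empty, Finset.sum_empty]
    positivity
  obtain ⟨a, ha0, haLam, hcap⟩ := h
  have hd : ∀ c ∈ Submodule.span F (Set.range (fun i => fun j => G i j)),
      c ≠ 0 → n - k + 1 ≤ hammingNorm c := by
    intro c hc hne
    have := hdmin.2 c hc hne
    omega
  set cI : Fin k → Fin n := fun i => Fin.castLE hkn i with hcI
  set s : Fin k → ℝ := fun i => ∑ R ∈ (Rs i).filter (fun R => cI i ∈ R), a i R with hsdef
  set t : Fin k → ℝ := fun i => ∑ R ∈ (Rs i).filter (fun R => cI i ∉ R), a i R with htdef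
  have hst : ∀ i, s i + t i = lam i := by
    intro i
    rw [← haLam i, hsdef, htdef]
    exact Finset.sum_filter_add_sum_filter_not _ _ _
  have hs0 : ∀ i, 0 ≤ s i := fun i => Finset.sum_nonneg fun R _ => ha0 i R
  have ht0 : ∀ i, 0 ≤ t i := fun i => Finset.sum_nonneg fun R _ => ha0 i R
  have hs1 : ∀ i, s i ≤ 1 := by
    intro i
    have h1 := hcap (cI i)
    have h2 : s i ≤ ∑ i', ∑ R ∈ Rs i', (if cI i ∈ R then a i' R else 0) := by
      have heq : s i = ∑ R ∈ Rs i, (if cI i ∈ R then a i R else 0) :=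
        (Finset.sum_filter _ _)
      rw [heq]
      refine Finset.single_le_sum
        (f := fun i' => ∑ R ∈ Rs i', if cI i ∈ R then a i' R else 0)
        (fun i' _ => Finset.sum_nonneg fun R _ => ?_) (Finset.mem_univ i)
      by_cases hc : cI i ∈ R <;> simp [hc, ha0]
    linarith
  have hcapT : ∑ i, ∑ R ∈ Rs i, a i R * R.card ≤ (n : ℝ) := by
    have key : ∑ i, ∑ R ∈ Rs i, a i R * R.card
        = ∑ j : Fin n, ∑ i, ∑ R ∈ Rs i, (if j ∈ R then a i R else 0) := by
      rw [Finset.sum_comm]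
      refine Finset.sum_congr rfl fun i _ => ?_
      rw [Finset.sum_comm]
      refine Finset.sum_congr rfl fun R _ => ?_
      simp [Finset.sum_ite_mem, Finset.univ_inter, Finset.sum_const, mul_comm]
    calc ∑ i, ∑ R ∈ Rs i, a i R * R.card
        = ∑ j : Fin n, ∑ i, ∑ R ∈ Rs i, (if j ∈ R then a i R else 0) := key
      _ ≤ ∑ _j : Fin n, (1 : ℝ) := Finset.sum_le_sum fun j _ => hcap j
      _ = n := by simp
  have hlow : ∀ i, s i + (k : ℝ) * t i ≤ ∑ R ∈ Rs i, a i R * R.card := by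
    intro i
    rw [← Finset.sum_filter_add_sum_filter_not (Rs i) (fun R => cI i ∈ R)
      (fun R => a i R * R.card)]
    have hA : s i ≤ ∑ R ∈ (Rs i).filter (fun R => cI i ∈ R), a i R * R.card := by
      refine Finset.sum_le_sum fun R hR => ?_
      have hmem := Finset.mem_filter.mp hR
      have hcard : (1 : ℝ) ≤ R.card := by
        have : 0 < R.card := Finset.card_pos.mpr ⟨cI i, hmem.2⟩
        exact_mod_cast this
      nlinarith [ha0 i R]
    have hB : (k : ℝ) * t i ≤ ∑ R ∈ (Rs i).filter (fun R => cI i ∉ R), a i R * R.card := by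
      rw [htdef, Finset.mul_sum]
      refine Finset.sum_le_sum fun R hR => ?_
      have hmem := Finset.mem_filter.mp hR
      have hcard : (k : ℝ) ≤ R.card := by
        exact_mod_cast rec_size hkn G hsys hd i R ((hRs i).2 R hmem.1) hmem.2
      nlinarith [ha0 i R]
    linarith
  have hpt : ∀ i, min (lam i) 1 + (k : ℝ) * max 0 (lam i - 1) ≤ s i + (k : ℝ) * t i := by
    intro i
    have hk1 : (1 : ℝ) ≤ k := by exact_mod_cast hk
    have h1 := hst i
    have h2 := hs1 i
    have h3 := ht0 i
    have h4 := hs0 i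
    rcases le_or_gt (lam i) 1 with hle | hlt
    · rw [min_eq_left hle, max_eq_left (by linarith)]
      nlinarith [mul_nonneg (by linarith : (0:ℝ) ≤ (k:ℝ) - 1) h3]
    · rw [min_eq_right hlt.le, max_eq_right (by linarith)]
      nlinarith [mul_nonneg (by linarith : (0:ℝ) ≤ (k:ℝ) - 1) (by linarith : (0:ℝ) ≤ 1 - s i)]
  calc ∑ i, (min (lam i) 1 + (k : ℝ) * max 0 (lam i - 1))
      ≤ ∑ i, (s i + (k : ℝ) * t i) := Finset.sum_le_sum fun i _ => hpt i
    _ ≤ ∑ i, ∑ R ∈ Rs i, a i R * R.card := Finset.sum_le_sum fun i _ => hlow i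
    _ ≤ n := hcapT
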